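/- Let n ≥ 3, p, m be integers with 1 ≤ p, 2p ≤ n and m ≥ 1. Let k(j,i), for 1 ≤ j ≤ m and 1 ≤ i ≤ n, be real numbers such that Σᵢ k(j,i) = 0 for every j. If Σ_{j=1}^m ( min over subsets a ⊆ {1,…,n} with |a| = p of K_a(k_j)·K_{⋆a}(k_j) ) = −(p(n−p)/n)·Σ_{j=1}^m Σ_{i=1}^n k(j,i)², then for each j there exist a subset a_j ⊆ {1,…,n} with |a_j| = p and real numbers λ_j, μ_j such that k(j,i) = λ_j for i ∈ a_j and k(j,i) = μ_j for i ∉ a_j. -/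

import Mathlib

lemma aux_cs (n p : ℕ) (hp : 1 ≤ p) (hpn : 2 * p ≤ n)
    (k : Fin n → ℝ) (hs : ∑ i, k i = 0) (a : Finset (Fin n)) (ha : a.card = p) :
    (∑ i ∈ a, k i)^2 ≤ ((p:ℝ) * ((n:ℝ) - p) / n) * ∑ i, k i ^ 2 ∧
    ((∑ i ∈ a, k i)^2 = ((p:ℝ) * ((n:ℝ) - p) / n) * ∑ i, k i ^ 2 →
      ∀ i, ((p:ℝ) * ((n:ℝ) - p) / n) * k i
        = (∑ i ∈ a, k i) * ((if i ∈ a then (1:ℝ) else 0) - p / n)) := by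
  have hn0 : (0:ℝ) < n := by
    have : 0 < n := by omega
    exact_mod_cast this
  have hpltn : (p:ℝ) < n := by
    have : p < n := by omega
    exact_mod_cast this
  have hp0 : (0:ℝ) < p := by
    have : 0 < p := hp
    exact_mod_cast this
  set B : ℝ := (p:ℝ) * ((n:ℝ) - p) / n with hB
  have hBpos : 0 < B := by
    apply div_pos _ hn0
    nlinarith
  set v : Fin n → ℝ := fun i => (if i ∈ a then (1:ℝ) else 0) - p / n with hv
  set S : ℝ := ∑ i ∈ a, k i with hS
  set T : ℝ := ∑ i, k i ^ 2 with hT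
  have hind : ∑ i, (if i ∈ a then (1:ℝ) else 0) = p := by
    rw [Finset.sum_ite_mem, Finset.univ_inter]
    simp [ha]
  have hv2 : ∑ i, v i ^ 2 = B := by
    have h1 : ∀ i, v i ^ 2 = (if i ∈ a then (1:ℝ) else 0) * (1 - 2*(p/n)) + (p/n)^2 := by
      intro i; by_cases h : i ∈ a <;> simp [hv, h] <;> try ring
    rw [Finset.sum_congr rfl (fun i _ => h1 i), Finset.sum_add_distrib,
      ← Finset.sum_mul, hind, Finset.sum_const]
    simp only [Finset.card_univ, Fintype.card_fin, nsmul_eq_mul]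
    rw [hB]
    have hne : (n:ℝ) ≠ 0 := hn0.ne'
    field_simp
    ring
  have hkv : ∑ i, k i * v i = S := by
    have h1 : ∀ i, k i * v i = (if i ∈ a then k i else 0) - (p/n) * k i := by
      intro i; by_cases h : i ∈ a <;> simp [hv, h] <;> try ring
    rw [Finset.sum_congr rfl (fun i _ => h1 i), Finset.sum_sub_distrib,
      Finset.sum_ite_mem, Finset.univ_inter, ← Finset.mul_sum, hs]
    simp [hS]
  have key : ∑ i, (B * k i - S * v i)^2 = B * (B * T - S^2) := by
    have expand : ∀ i, (B * k i - S * v i)^2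
        = B^2 * (k i)^2 - 2*B*S*(k i * v i) + S^2 * (v i)^2 := fun i => by ring
    rw [Finset.sum_congr rfl (fun i _ => expand i), Finset.sum_add_distrib,
      Finset.sum_sub_distrib, ← Finset.mul_sum, ← Finset.mul_sum, ← Finset.mul_sum,
      hkv, hv2, hT]
    ring
  have hnn : 0 ≤ ∑ i, (B * k i - S * v i)^2 :=
    Finset.sum_nonneg fun i _ => sq_nonneg _
  constructor
  · rw [key] at hnn
    nlinarith
  · intro heq i
    have hz : ∑ i, (B * k i - S * v i)^2 = 0 := by
      rw [key, ← heq]; ring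
    have := (Finset.sum_eq_zero_iff_of_nonneg
      (fun i _ => sq_nonneg (B * k i - S * v i))).mp hz i (Finset.mem_univ i)
    have h0 : B * k i - S * v i = 0 := pow_eq_zero_iff (by norm_num) |>.mp this
    have : B * k i = S * v i := by linarith
    simpa [hv] using this

theorem bochner_equality_case_tracefree (n p m : ℕ) (hn : 3 ≤ n) (hp : 1 ≤ p)
    (hpn : 2 * p ≤ n) (hm : 1 ≤ m)
    (k : Fin m → Fin n → ℝ)
    (hj : ∀ j : Fin m, ∑ i, k j i = 0)
    (heq : ∑ j, (Finset.univ.powersetCard p).inf'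
        (Finset.powersetCard_nonempty.mpr
          (by simp only [Finset.card_univ, Fintype.card_fin]; omega))
        (fun a => (∑ i ∈ a, k j i) * (∑ i ∈ aᶜ, k j i))
      = -((p : ℝ) * ((n : ℝ) - (p : ℝ)) / (n : ℝ)) * ∑ j, ∑ i, (k j i) ^ 2) :
    ∀ j : Fin m, ∃ a : Finset (Fin n), a.card = p ∧ ∃ lam mu : ℝ,
      (∀ i ∈ a, k j i = lam) ∧ (∀ i ∉ a, k j i = mu) := by
  have hne : (Finset.univ : Finset (Fin n)).powersetCard p |>.Nonempty :=
    Finset.powersetCard_nonempty.mpr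
      (by simp only [Finset.card_univ, Fintype.card_fin]; omega)
  set B : ℝ := (p:ℝ) * ((n:ℝ) - p) / n with hB
  have hn0 : (0:ℝ) < n := by
    have : 0 < n := by omega
    exact_mod_cast this
  have hBpos : 0 < B := by
    have hpltn : (p:ℝ) < n := by
      have : p < n := by omega
      exact_mod_cast this
    have hp0 : (0:ℝ) < p := by
      have : 0 < p := hp
      exact_mod_cast this
    apply div_pos _ hn0
    nlinarith
  -- value of the product in terms of the square of partial sum
  have hcompl : ∀ (j : Fin m) (a : Finset (Fin n)),
      ∑ i ∈ aᶜ, k j i = - ∑ i ∈ a, k j i := by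
    intro j a
    have h := Finset.sum_add_sum_compl a (k j)
    rw [hj j] at h
    linarith
  -- lower bound on each inf'
  have hlow : ∀ j : Fin m,
      -(B * ∑ i, (k j i)^2) ≤ (Finset.univ.powersetCard p).inf' hne
        (fun a => (∑ i ∈ a, k j i) * (∑ i ∈ aᶜ, k j i)) := by
    intro j
    apply Finset.le_inf'
    intro a hamem
    have hac : a.card = p := (Finset.mem_powersetCard_univ.mp hamem)
    have := (aux_cs n p hp hpn (k j) (hj j) a hac).1
    rw [hcompl j a]
    nlinarith
  -- each inf' equals its lower bound
  have hterm : ∀ j : Fin m, (Finset.univ.powersetCard p).inf' hne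
      (fun a => (∑ i ∈ a, k j i) * (∑ i ∈ aᶜ, k j i))
      = -(B * ∑ i, (k j i)^2) := by
    have hsum0 : ∑ j : Fin m, ((Finset.univ.powersetCard p).inf' hne
        (fun a => (∑ i ∈ a, k j i) * (∑ i ∈ aᶜ, k j i))
        + B * ∑ i, (k j i)^2) = 0 := by
      rw [Finset.sum_add_distrib, ← Finset.mul_sum, heq]
      ring
    intro j
    have := (Finset.sum_eq_zero_iff_of_nonneg
      (fun j _ => by have := hlow j; linarith)).mp hsum0 j (Finset.mem_univ j)
    linarith
  intro j
  obtain ⟨a₀, ha₀mem, ha₀val⟩ := Finset.exists_mem_eq_inf' hne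
    (fun a => (∑ i ∈ a, k j i) * (∑ i ∈ aᶜ, k j i))
  have ha₀card : a₀.card = p := Finset.mem_powersetCard_univ.mp ha₀mem
  have hSeq : (∑ i ∈ a₀, k j i)^2 = B * ∑ i, (k j i)^2 := by
    have h1 := hterm j
    rw [ha₀val, hcompl j a₀] at h1
    nlinarith [h1]
  have hprop := (aux_cs n p hp hpn (k j) (hj j) a₀ ha₀card).2 hSeq
  set S : ℝ := ∑ i ∈ a₀, k j i
  refine ⟨a₀, ha₀card, S * (1 - p/n) / B, S * (0 - p/n) / B, ?_, ?_⟩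
  · intro i hi
    have h2 := hprop i
    rw [if_pos hi, ← hB] at h2
    rw [eq_div_iff hBpos.ne']
    linarith
  · intro i hi
    have h2 := hprop i
    rw [if_neg hi, ← hB] at h2
    rw [eq_div_iff hBpos.ne']
    linarith
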